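/- With M as in the determinant construction for an r-linearized equation with coefficients in F_{r^m}, all coefficients of the q-linearized polynomial det M lie in the base field F_r; equivalently, for each admissible multiplicity vector (μ₀,...,μ_{m−1}), the coefficient c = Σ_{σ ∈ 𝔖} (−1)^{sgn σ} ∏_{i=0}^{m−1} aᵢ^{Σ_{j: σ(j)−j ≡ i} r^j} satisfies c^r = c, where 𝔖 is the set of permutations σ of Z/mZ with difference multiset given by (μ₀,...,μ_{m−1}). -/

import Mathlib

open Polynomial Finset

section Aux

variable {Ω : Type*} [Field Ω]

private lemma aux_pow_eq_pow_of_modEq {x : Ω} {n a b : ℕ} (hx : x ^ n = 1)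
    (h : a ≡ b [MOD n]) : x ^ a = x ^ b := by
  wlog hab : a ≤ b generalizing a b
  · exact (this h.symm (le_of_not_ge hab)).symm
  obtain ⟨t, ht⟩ := (Nat.modEq_iff_dvd' hab).mp h
  have hb : b = a + n * t := by omega
  subst hb
  rw [pow_add, pow_mul, hx, one_pow, mul_one]

private lemma aux_val_succ {m : ℕ} [NeZero m] (j : ZMod m) :
    (j + 1 : ZMod m).val = (j.val + 1) % m := by
  have h1 : (1 : ZMod m).val = 1 % m := by
    conv_lhs => rw [show (1 : ZMod m) = ((1 : ℕ) : ZMod m) by norm_cast]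
    exact ZMod.val_natCast m 1
  rw [ZMod.val_add, h1]
  conv_rhs => rw [Nat.add_mod, Nat.mod_eq_of_lt (ZMod.val_lt j)]

private lemma aux_key {r m : ℕ} [NeZero m] (hr : 2 ≤ r) {x : Ω} (hx : x ^ r ^ m = x)
    (T : Finset (ZMod m)) :
    (x ^ ∑ j ∈ T, r ^ j.val) ^ r = x ^ ∑ j ∈ T, r ^ ((j + 1 : ZMod m)).val := by
  rw [← pow_mul]
  by_cases hx0 : x = 0
  · subst hx0
    rcases T.eq_empty_or_nonempty with hT | hT
    · simp [hT]
    · have hrpos : 0 < r := by omega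
      have e1 : 0 < ∑ j ∈ T, r ^ j.val :=
        Finset.sum_pos (fun j _ => pow_pos hrpos j.val) hT
      have e2 : 0 < ∑ j ∈ T, r ^ ((j + 1 : ZMod m)).val :=
        Finset.sum_pos (fun j _ => pow_pos hrpos _) hT
      rw [zero_pow (by positivity), zero_pow (by omega)]
  · have hn : 1 ≤ r ^ m := Nat.one_le_pow _ _ (by omega)
    have hx1 : x ^ (r ^ m - 1) = 1 := by
      have h : x ^ (r ^ m - 1) * x = 1 * x := by
        rw [one_mul, ← pow_succ, Nat.sub_add_cancel hn, hx]
      exact mul_right_cancel₀ hx0 h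
    apply aux_pow_eq_pow_of_modEq hx1
    set n := r ^ m - 1 with hndef
    apply (ZMod.natCast_eq_natCast_iff _ _ _).mp
    push_cast
    rw [Finset.sum_mul]
    apply Finset.sum_congr rfl
    intro j _
    rw [← pow_succ]
    have hrm : (r : ZMod n) ^ m = 1 := by
      have : ((r ^ m : ℕ) : ZMod n) = ((n + 1 : ℕ) : ZMod n) := by
        congr 1; omega
      push_cast at this
      simpa using this
    have hval := aux_val_succ j
    have hjlt : j.val < m := ZMod.val_lt j
    by_cases hj : j.val + 1 = m
    · rw [hj, hrm, hval, hj, Nat.mod_self, pow_zero]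
    · rw [hval, Nat.mod_eq_of_lt (by omega)]

end Aux

/-- The coefficients of `det M` lie in `F_r`: for each admissible multiplicity vector
`(μ₀, ..., μ_{m-1})`, the coefficient
`c = ∑_{σ ∈ 𝔖} (−1)^{sgn σ} ∏ᵢ aᵢ^{∑_{j : σ(j)−j ≡ i} r^j}` satisfies `c^r = c`, where
`𝔖` is the set of permutations of `ℤ/mℤ` with difference multiset `(μ₀, ..., μ_{m-1})`. -/
theorem stmt9 (r m : ℕ) [NeZero m] (hr : IsPrimePow r)
    (Ω : Type*) [Field Ω]
    (L : Subfield Ω) [Fintype L] (hL : Fintype.card L = r ^ m)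
    (a : ZMod m → Ω) (ha : ∀ i, a i ∈ L)
    (μ : ZMod m → ℕ) (h1 : ∑ i : ZMod m, μ i = m)
    (h2 : (∑ i : ZMod m, i.val * μ i) % m = 0)
    (c : Ω)
    (hc : c = ∑ σ ∈ Finset.univ.filter
        (fun σ : Equiv.Perm (ZMod m) =>
          ∀ i : ZMod m, (Finset.univ.filter fun j : ZMod m => σ j - j = i).card = μ i),
      ((Equiv.Perm.sign σ : ℤ) : Ω) *
        ∏ i : ZMod m,
          a i ^ (∑ j ∈ Finset.univ.filter (fun j : ZMod m => σ j - j = i), r ^ j.val)) :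
    c ^ r = c := by
  classical
  obtain ⟨p, k, hp, hk, hrk⟩ := hr
  have hp' : Nat.Prime p := Nat.prime_iff.mpr hp
  haveI : Fact p.Prime := ⟨hp'⟩
  have hr2 : 2 ≤ r := by
    have := hp'.two_le
    calc 2 ≤ p := this
    _ ≤ p ^ k := Nat.le_self_pow (by omega) p
    _ = r := hrk
  -- characteristic of Ω is p
  obtain ⟨n, hpn, hcard⟩ := @FiniteField.card L _ _ (ringChar L) (ringChar.charP L)
  have hdvd : ringChar L ∣ p ^ (k * m) := by
    have h : ringChar L ∣ (ringChar L) ^ (n : ℕ) := dvd_pow_self _ n.pos.ne'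
    rw [← hcard, hL, ← hrk, ← pow_mul] at h
    exact h
  have hch : ringChar L = p :=
    (Nat.prime_dvd_prime_iff_eq hpn hp').mp (hpn.dvd_of_dvd_pow hdvd)
  haveI hchL : CharP (↥L) p := by rw [← hch]; exact ringChar.charP L
  haveI : CharP Ω p :=
    charP_of_injective_ringHom (f := L.subtype) L.subtype_injective p
  -- the conjugating permutation
  set g : Equiv.Perm (ZMod m) := Equiv.addRight (1 : ZMod m) with hg
  have hgapp : ∀ (σ : Equiv.Perm (ZMod m)) (j : ZMod m),
      (g * σ * g⁻¹) j = σ (j - 1) + 1 := by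
    intro σ j
    simp [hg, Equiv.Perm.mul_apply, Equiv.subRight, sub_eq_add_neg]
  have hset : ∀ (σ : Equiv.Perm (ZMod m)) (i : ZMod m),
      (Finset.univ.filter fun j : ZMod m => (g * σ * g⁻¹) j - j = i) =
        (Finset.univ.filter fun j : ZMod m => σ j - j = i).image (· + 1) := by
    intro σ i
    ext j
    simp only [Finset.mem_filter, Finset.mem_univ, true_and, Finset.mem_image, hgapp]
    constructor
    · intro h
      exact ⟨j - 1, by rw [← h]; ring_nf, by ring⟩
    · rintro ⟨t, ht, rfl⟩
      rw [← ht]; ring_nf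
  have hinj : Function.Injective (fun x : ZMod m => x + 1) :=
    fun x y h => by simpa using h
  -- membership iff
  set P : Equiv.Perm (ZMod m) → Prop := fun σ =>
    ∀ i : ZMod m, (Finset.univ.filter fun j : ZMod m => σ j - j = i).card = μ i with hP
  have hPmem : ∀ σ : Equiv.Perm (ZMod m), P (g * σ * g⁻¹) ↔ P σ := by
    intro σ
    constructor <;> intro h i <;> have hi := h i
    · rwa [hset σ i, Finset.card_image_of_injective _ hinj] at hi
    · rwa [hset σ i, Finset.card_image_of_injective _ hinj]
  -- term function
  set f : Equiv.Perm (ZMod m) → Ω := fun σ =>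
    ((Equiv.Perm.sign σ : ℤ) : Ω) *
      ∏ i : ZMod m,
        a i ^ (∑ j ∈ Finset.univ.filter (fun j : ZMod m => σ j - j = i), r ^ j.val) with hf
  -- Frobenius is additive
  have hsum : (∑ σ ∈ Finset.univ.filter P, f σ) ^ r =
      ∑ σ ∈ Finset.univ.filter P, (f σ) ^ r := by
    rw [← hrk]
    have h := map_sum (iterateFrobenius Ω p k) f (Finset.univ.filter P)
    simp only [iterateFrobenius_def] at h
    exact h
  rw [hc]
  show ((Finset.univ.filter P).sum f) ^ r = (Finset.univ.filter P).sum f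
  rw [hsum]
  -- termwise : (f σ) ^ r = f (g * σ * g⁻¹)
  have hterm : ∀ σ : Equiv.Perm (ZMod m), (f σ) ^ r = f (g * σ * g⁻¹) := by
    intro σ
    have hsign : ((Equiv.Perm.sign (g * σ * g⁻¹) : ℤ) : Ω) =
        ((Equiv.Perm.sign σ : ℤ) : Ω) ^ r := by
      have h1 : Equiv.Perm.sign (g * σ * g⁻¹) = Equiv.Perm.sign σ := by
        simp [map_mul, mul_comm, mul_left_comm, Int.units_mul_self]
      rw [h1]
      rcases Int.units_eq_one_or (Equiv.Perm.sign σ) with h | h <;> rw [h]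
      · simp
      · push_cast
        rcases Nat.even_or_odd r with he | ho
        · have hp2 : p = 2 := by
            have : (2 : ℕ) ∣ p ^ k := by rwa [hrk, ← even_iff_two_dvd]
            exact ((Nat.prime_dvd_prime_iff_eq Nat.prime_two hp').mp
              (Nat.Prime.dvd_of_dvd_pow Nat.prime_two this)).symm
          haveI : CharP Ω 2 := by rwa [hp2] at ‹CharP Ω p›
          rw [CharTwo.neg_eq (1 : Ω)]
          simp
        · rw [ho.neg_one_pow]
    have hprod : (∏ i : ZMod m,
        a i ^ (∑ j ∈ Finset.univ.filter (fun j : ZMod m => σ j - j = i), r ^ j.val)) ^ r =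
        ∏ i : ZMod m, a i ^ (∑ j ∈ Finset.univ.filter
          (fun j : ZMod m => (g * σ * g⁻¹) j - j = i), r ^ j.val) := by
      rw [← Finset.prod_pow]
      apply Finset.prod_congr rfl
      intro i _
      rw [hset σ i, Finset.sum_image (fun x _ y _ h => hinj h)]
      have hxL : (a i) ^ r ^ m = a i := by
        have := FiniteField.pow_card (⟨a i, ha i⟩ : L)
        rw [hL] at this
        have := congrArg (Subtype.val) this
        push_cast at this
        simpa using this
      exact aux_key hr2 hxL _
    rw [hf]
    simp only [mul_pow, hsign, hprod]
  calc ∑ σ ∈ Finset.univ.filter P, (f σ) ^ r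
      = ∑ σ ∈ Finset.univ.filter P, f (g * σ * g⁻¹) :=
        Finset.sum_congr rfl (fun σ _ => hterm σ)
    _ = ∑ σ ∈ Finset.univ.filter P, f σ := by
        apply Finset.sum_bij' (fun σ _ => g * σ * g⁻¹) (fun σ _ => g⁻¹ * σ * g)
        · intro σ hσ
          rw [Finset.mem_filter] at hσ ⊢
          exact ⟨Finset.mem_univ _, (hPmem σ).mpr hσ.2⟩
        · intro σ hσ
          rw [Finset.mem_filter] at hσ ⊢
          refine ⟨Finset.mem_univ _, ?_⟩
          have := (hPmem (g⁻¹ * σ * g)).mp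
          apply this
          have hgg : g * (g⁻¹ * σ * g) * g⁻¹ = σ := by group
          rw [hgg]
          exact hσ.2
        · intro σ _; group
        · intro σ _; group
        · intro σ _; rfl
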